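/- Under the hypotheses of the preceding compressed-trajectory setting (U_l, V_l orthogonal with V_{l+1} = U_l, U_lᵀ·W_l(t)·V_l = diag(W̃_l(t), ρ_l(t)·I_m) with W̃_l(0) = ε_l·I_{2r}, and compressed iterates Ŵ_l(t) defined by Ŵ_l(0) := ε_l·I_{2r} and Ŵ_l(t+1) := (1 − ηλ)·Ŵ_l(t) − η·Ŵ_{L:l+1}(t)ᵀ·(Ŵ_{L:1}(t) − U_{L,1}ᵀ·Φ·V_{1,1})·Ŵ_{l−1:1}(t)ᵀ), for every t ≥ 0 one has the exact identity ‖W_{L:1}(t) − U_{L,1}·Ŵ_{L:1}(t)·V_{1,1}ᵀ‖_F² = m·∏_{l=1}^L ρ_l(t)², where ‖·‖_F denotes the Frobenius norm and U_{L,1}, V_{1,1} are the first 2r columns of U_L, V_1. -/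
import Mathlib


open Matrix BigOperators Filter

noncomputable section

/-- Auxiliary: product of `k` consecutive matrices ending (on the right) at index `i`. -/
def chainAux {n : Type*} [Fintype n] [DecidableEq n]
    (W : ℕ → Matrix n n ℝ) (i : ℕ) : ℕ → Matrix n n ℝ
  | 0 => 1
  | (k+1) => W (i + k) * chainAux W i k

/-- `chain W i j = W j * W (j-1) * ⋯ * W i`; equals `1` when `j < i` (empty product). -/
def chain {n : Type*} [Fintype n] [DecidableEq n]
    (W : ℕ → Matrix n n ℝ) (i j : ℕ) : Matrix n n ℝ :=
  chainAux W i (j + 1 - i)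

/-- `blockDiag r m A B` is the `(2r+m)×(2r+m)` block-diagonal matrix `diag(A, B)`
with top-left block `A` (of size `2r×2r`) and bottom-right block `B` (of size `m×m`). -/
def blockDiag (r m : ℕ) (A : Matrix (Fin (2*r)) (Fin (2*r)) ℝ)
    (B : Matrix (Fin m) (Fin m) ℝ) : Matrix (Fin (2*r + m)) (Fin (2*r + m)) ℝ :=
  Matrix.reindex finSumFinEquiv finSumFinEquiv (Matrix.fromBlocks A 0 0 B)

/-- The `d×2r` matrix formed by the first `2r` columns of a `(2r+m)×(2r+m)` matrix. -/
def cols1 (r m : ℕ) (U : Matrix (Fin (2*r + m)) (Fin (2*r + m)) ℝ) :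
    Matrix (Fin (2*r + m)) (Fin (2*r)) ℝ :=
  fun i j => U i (Fin.castAdd m j)

/-- The `d×m` matrix formed by the last `m` columns of a `(2r+m)×(2r+m)` matrix. -/
def cols2 (r m : ℕ) (U : Matrix (Fin (2*r + m)) (Fin (2*r + m)) ℝ) :
    Matrix (Fin (2*r + m)) (Fin m) ℝ :=
  fun i j => U i (Fin.natAdd (2*r) j)

/-- Squared Frobenius norm: `‖A‖_F² = trace(AᵀA)`. -/
def frobSq {p q : Type*} [Fintype p] [Fintype q] (A : Matrix p q ℝ) : ℝ :=
  Matrix.trace (Aᵀ * A)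

/-- Frobenius norm: `‖A‖_F = √(trace(AᵀA))`. -/
def frobNorm {p q : Type*} [Fintype p] [Fintype q] (A : Matrix p q ℝ) : ℝ :=
  Real.sqrt (Matrix.trace (Aᵀ * A))

namespace S12

variable {r m : ℕ}

/-- top-left block extraction -/
def tl (r m : ℕ) (M : Matrix (Fin (2*r + m)) (Fin (2*r + m)) ℝ) :
    Matrix (Fin (2*r)) (Fin (2*r)) ℝ :=
  M.submatrix (Fin.castAdd m) (Fin.castAdd m)

lemma bd_mul (A C : Matrix (Fin (2*r)) (Fin (2*r)) ℝ) (B D : Matrix (Fin m) (Fin m) ℝ) :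
    _root_.blockDiag r m A B * _root_.blockDiag r m C D = _root_.blockDiag r m (A * C) (B * D) := by
  simp only [_root_.blockDiag, Matrix.reindex_apply]
  rw [Matrix.submatrix_mul_equiv, Matrix.fromBlocks_multiply]
  simp

lemma bd_one : _root_.blockDiag r m 1 1 = (1 : Matrix (Fin (2*r + m)) (Fin (2*r + m)) ℝ) := by
  simp only [_root_.blockDiag, Matrix.fromBlocks_one, Matrix.reindex_apply,
    Matrix.submatrix_one_equiv]

lemma bd_transpose (A : Matrix (Fin (2*r)) (Fin (2*r)) ℝ) (B : Matrix (Fin m) (Fin m) ℝ) :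
    (_root_.blockDiag r m A B)ᵀ = _root_.blockDiag r m Aᵀ Bᵀ := by
  simp only [_root_.blockDiag, Matrix.reindex_apply, Matrix.transpose_submatrix,
    Matrix.fromBlocks_transpose, Matrix.transpose_zero]

lemma fb_sub {n o p q : Type*} (A A' : Matrix n p ℝ) (B B' : Matrix n q ℝ)
    (C C' : Matrix o p ℝ) (D D' : Matrix o q ℝ) :
    Matrix.fromBlocks A B C D - Matrix.fromBlocks A' B' C' D' =
      Matrix.fromBlocks (A - A') (B - B') (C - C') (D - D') := by
  ext i j
  cases i <;> cases j <;> simp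

lemma bd_sub (A C : Matrix (Fin (2*r)) (Fin (2*r)) ℝ) (B D : Matrix (Fin m) (Fin m) ℝ) :
    _root_.blockDiag r m A B - _root_.blockDiag r m C D = _root_.blockDiag r m (A - C) (B - D) := by
  simp only [_root_.blockDiag, Matrix.reindex_apply]
  have : ∀ (X Y : Matrix (Fin (2*r) ⊕ Fin m) (Fin (2*r) ⊕ Fin m) ℝ),
      X.submatrix finSumFinEquiv.symm finSumFinEquiv.symm -
        Y.submatrix finSumFinEquiv.symm finSumFinEquiv.symm =
      (X - Y).submatrix finSumFinEquiv.symm finSumFinEquiv.symm := fun X Y => rfl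
  rw [this, fb_sub]
  simp

lemma bd_smul (c : ℝ) (A : Matrix (Fin (2*r)) (Fin (2*r)) ℝ) (B : Matrix (Fin m) (Fin m) ℝ) :
    c • _root_.blockDiag r m A B = _root_.blockDiag r m (c • A) (c • B) := by
  simp only [_root_.blockDiag, Matrix.reindex_apply]
  have : ∀ (X : Matrix (Fin (2*r) ⊕ Fin m) (Fin (2*r) ⊕ Fin m) ℝ),
      c • X.submatrix finSumFinEquiv.symm finSumFinEquiv.symm =
      (c • X).submatrix finSumFinEquiv.symm finSumFinEquiv.symm := fun X => rfl
  rw [this, Matrix.fromBlocks_smul]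
  simp

lemma tl_bd (A : Matrix (Fin (2*r)) (Fin (2*r)) ℝ) (B : Matrix (Fin m) (Fin m) ℝ) :
    tl r m (_root_.blockDiag r m A B) = A := by
  ext a b
  simp [tl, _root_.blockDiag]

lemma tl_sub (M N : Matrix (Fin (2*r + m)) (Fin (2*r + m)) ℝ) :
    tl r m (M - N) = tl r m M - tl r m N := rfl

lemma tl_smul (c : ℝ) (M : Matrix (Fin (2*r + m)) (Fin (2*r + m)) ℝ) :
    tl r m (c • M) = c • tl r m M := rfl

lemma tl_reindex (X : Matrix (Fin (2*r) ⊕ Fin m) (Fin (2*r) ⊕ Fin m) ℝ) :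
    tl r m (Matrix.reindex finSumFinEquiv finSumFinEquiv X) = X.toBlocks₁₁ := by
  ext a b
  simp [tl, Matrix.toBlocks₁₁]

lemma reindex_mul (X Y : Matrix (Fin (2*r) ⊕ Fin m) (Fin (2*r) ⊕ Fin m) ℝ) :
    Matrix.reindex finSumFinEquiv finSumFinEquiv X *
      Matrix.reindex finSumFinEquiv finSumFinEquiv Y =
    Matrix.reindex finSumFinEquiv finSumFinEquiv (X * Y) := by
  simp only [Matrix.reindex_apply]
  rw [Matrix.submatrix_mul_equiv]

lemma toBlocks11_reindex (M : Matrix (Fin (2*r + m)) (Fin (2*r + m)) ℝ) :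
    (Matrix.reindex finSumFinEquiv.symm finSumFinEquiv.symm M).toBlocks₁₁ = tl r m M := by
  ext a b
  simp [Matrix.toBlocks₁₁, tl]

lemma tl_bd_mul_bd (A C : Matrix (Fin (2*r)) (Fin (2*r)) ℝ) (B D : Matrix (Fin m) (Fin m) ℝ)
    (M : Matrix (Fin (2*r + m)) (Fin (2*r + m)) ℝ) :
    tl r m (_root_.blockDiag r m A B * M * _root_.blockDiag r m C D) = A * tl r m M * C := by
  have hM : M = Matrix.reindex finSumFinEquiv finSumFinEquiv
      (Matrix.reindex finSumFinEquiv.symm finSumFinEquiv.symm M) := by simp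
  conv_lhs => rw [hM]
  rw [show _root_.blockDiag r m A B = Matrix.reindex finSumFinEquiv finSumFinEquiv
      (Matrix.fromBlocks A 0 0 B) from rfl,
    show _root_.blockDiag r m C D = Matrix.reindex finSumFinEquiv finSumFinEquiv
      (Matrix.fromBlocks C 0 0 D) from rfl,
    reindex_mul, reindex_mul, tl_reindex,
    ← Matrix.fromBlocks_toBlocks (Matrix.reindex finSumFinEquiv.symm finSumFinEquiv.symm M),
    Matrix.fromBlocks_multiply, Matrix.fromBlocks_multiply, Matrix.toBlocks_fromBlocks₁₁,
    toBlocks11_reindex]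
  simp

lemma tl_conj (X Y M : Matrix (Fin (2*r + m)) (Fin (2*r + m)) ℝ) :
    tl r m (Xᵀ * M * Y) = (cols1 r m X)ᵀ * M * cols1 r m Y := by
  ext a b
  simp [tl, cols1, Matrix.mul_apply]

lemma mul_bd_col₁ (X : Matrix (Fin (2*r + m)) (Fin (2*r + m)) ℝ)
    (A : Matrix (Fin (2*r)) (Fin (2*r)) ℝ) (i : Fin (2*r + m)) (b : Fin (2*r)) :
    (X * _root_.blockDiag r m A 0) i (Fin.castAdd m b) =
      ∑ a, X i (Fin.castAdd m a) * A a b := by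
  rw [Matrix.mul_apply, ← finSumFinEquiv.sum_comp, Fintype.sum_sum_type]
  simp [_root_.blockDiag]

lemma mul_bd_col₂ (X : Matrix (Fin (2*r + m)) (Fin (2*r + m)) ℝ)
    (A : Matrix (Fin (2*r)) (Fin (2*r)) ℝ) (i : Fin (2*r + m)) (c : Fin m) :
    (X * _root_.blockDiag r m A 0) i (Fin.natAdd (2*r) c) = 0 := by
  rw [Matrix.mul_apply, ← finSumFinEquiv.sum_comp, Fintype.sum_sum_type]
  simp [_root_.blockDiag]

lemma cols1_conj (X Y : Matrix (Fin (2*r + m)) (Fin (2*r + m)) ℝ)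
    (A : Matrix (Fin (2*r)) (Fin (2*r)) ℝ) :
    cols1 r m X * A * (cols1 r m Y)ᵀ = X * _root_.blockDiag r m A 0 * Yᵀ := by
  ext i j
  conv_rhs => rw [Matrix.mul_apply, ← finSumFinEquiv.sum_comp, Fintype.sum_sum_type]
  simp only [finSumFinEquiv_apply_left, finSumFinEquiv_apply_right,
    mul_bd_col₁, mul_bd_col₂, zero_mul, Finset.sum_const_zero, add_zero,
    Matrix.transpose_apply]
  simp [cols1, Matrix.mul_apply, Matrix.transpose_apply]

lemma trace_bd (A : Matrix (Fin (2*r)) (Fin (2*r)) ℝ) (B : Matrix (Fin m) (Fin m) ℝ) :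
    Matrix.trace (_root_.blockDiag r m A B) = Matrix.trace A + Matrix.trace B := by
  simp only [Matrix.trace, Matrix.diag, _root_.blockDiag, Matrix.reindex_apply, Matrix.submatrix_apply]
  rw [← finSumFinEquiv.sum_comp]
  simp only [Equiv.symm_apply_apply]
  rw [Fintype.sum_sum_type]
  simp [Matrix.fromBlocks]



lemma chain_empty {n : Type*} [Fintype n] [DecidableEq n] (W : ℕ → Matrix n n ℝ)
    {i j : ℕ} (h : j + 1 ≤ i) : chain W i j = 1 := by
  unfold chain
  rw [Nat.sub_eq_zero_of_le h]
  rfl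

lemma chain_self {n : Type*} [Fintype n] [DecidableEq n] (W : ℕ → Matrix n n ℝ) (i : ℕ) :
    chain W i i = W i := by
  unfold chain
  have h : i + 1 - i = 1 := by omega
  rw [h]
  show W (i + 0) * chainAux W i 0 = W i
  simp [chainAux]

lemma chain_succ {n : Type*} [Fintype n] [DecidableEq n] (W : ℕ → Matrix n n ℝ)
    {i j : ℕ} (h : i ≤ j + 1) : chain W i (j+1) = W (j+1) * chain W i j := by
  unfold chain
  have h1 : j + 1 + 1 - i = (j + 1 - i) + 1 := by omega
  rw [h1]
  show W (i + (j + 1 - i)) * chainAux W i (j + 1 - i) = _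
  have h2 : i + (j + 1 - i) = j + 1 := by omega
  rw [h2]

lemma chainAux_congr {n : Type*} [Fintype n] [DecidableEq n] (W W' : ℕ → Matrix n n ℝ)
    (i : ℕ) : ∀ N, (∀ k, i ≤ k → k < i + N → W k = W' k) →
    chainAux W i N = chainAux W' i N
  | 0, _ => rfl
  | (N+1), h => by
    show W (i + N) * chainAux W i N = W' (i + N) * chainAux W' i N
    rw [h (i + N) (by omega) (by omega),
      chainAux_congr W W' i N (fun k hk hk' => h k hk (by omega))]

lemma chain_congr {n : Type*} [Fintype n] [DecidableEq n] (W W' : ℕ → Matrix n n ℝ)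
    {i j : ℕ} (h : ∀ k, i ≤ k → k ≤ j → W k = W' k) : chain W i j = chain W' i j := by
  unfold chain
  exact chainAux_congr W W' i _ (fun k hk hk' => h k hk (by omega))

lemma sandwich {n : Type*} [Fintype n] [DecidableEq n]
    (U1 M1 Q M2 V2 : Matrix n n ℝ) (h : Qᵀ * Q = 1) :
    (U1 * M1 * Qᵀ) * (Q * M2 * V2) = U1 * (M1 * M2) * V2 := by
  simp only [Matrix.mul_assoc]
  rw [← Matrix.mul_assoc Qᵀ Q, h, Matrix.one_mul]

end S12

/-- exact identity for the compression error:
`‖W_{L:1}(t) − U_{L,1}·Ŵ_{L:1}(t)·V_{1,1}ᵀ‖_F² = m·∏_{l=1}^L ρ_l(t)²`. -/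
theorem statement12
    (r m : ℕ) (hm : 0 < m) (L : ℕ) (hL : 1 ≤ L)
    (Φ : Matrix (Fin (2*r + m)) (Fin (2*r + m)) ℝ) (hΦ : Φ.rank ≤ r)
    (ε : ℕ → ℝ) (hε : ∀ l, 1 ≤ l → l ≤ L → 0 < ε l)
    (η lam : ℝ) (hη : 0 < η) (hlam : 0 ≤ lam)
    (W : ℕ → ℕ → Matrix (Fin (2*r + m)) (Fin (2*r + m)) ℝ)
    (hW0 : ∀ l, 1 ≤ l → l ≤ L →
      W 0 l * (W 0 l)ᵀ = (ε l)^2 • (1 : Matrix (Fin (2*r + m)) (Fin (2*r + m)) ℝ) ∧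
      (W 0 l)ᵀ * W 0 l = (ε l)^2 • (1 : Matrix (Fin (2*r + m)) (Fin (2*r + m)) ℝ))
    (hWupd : ∀ t l, 1 ≤ l → l ≤ L →
      W (t+1) l = (1 - η * lam) • W t l
        - η • ((chain (W t) (l+1) L)ᵀ * (chain (W t) 1 L - Φ) * (chain (W t) 1 (l-1))ᵀ))
    (ρ : ℕ → ℕ → ℝ)
    (hρ0 : ∀ l, ρ 0 l = ε l)
    (hρ : ∀ t l, ρ (t+1) l
      = ρ t l * (1 - η * lam - η * ∏ k ∈ (Finset.Icc 1 L).erase l, (ρ t k)^2))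
    -- the block-diagonal decomposition hypothesis
    (U V : ℕ → Matrix (Fin (2*r + m)) (Fin (2*r + m)) ℝ)
    (hU : ∀ l, 1 ≤ l → l ≤ L → ((U l)ᵀ * U l = 1 ∧ U l * (U l)ᵀ = 1))
    (hV : ∀ l, 1 ≤ l → l ≤ L → ((V l)ᵀ * V l = 1 ∧ V l * (V l)ᵀ = 1))
    (hUV : ∀ l, 1 ≤ l → l + 1 ≤ L → V (l+1) = U l)
    (Wtil : ℕ → ℕ → Matrix (Fin (2*r)) (Fin (2*r)) ℝ)
    (hdecomp : ∀ t l, 1 ≤ l → l ≤ L →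
      (U l)ᵀ * W t l * V l = blockDiag r m (Wtil t l) (ρ t l • 1))
    (hWtil0 : ∀ l, 1 ≤ l → l ≤ L → Wtil 0 l = ε l • 1)
    -- the compressed iterates
    (What : ℕ → ℕ → Matrix (Fin (2*r)) (Fin (2*r)) ℝ)
    (hWhat0 : ∀ l, 1 ≤ l → l ≤ L → What 0 l = ε l • 1)
    (hWhatupd : ∀ t l, 1 ≤ l → l ≤ L →
      What (t+1) l = (1 - η * lam) • What t l
        - η • ((chain (What t) (l+1) L)ᵀ
            * (chain (What t) 1 L - (cols1 r m (U L))ᵀ * Φ * cols1 r m (V 1))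
            * (chain (What t) 1 (l-1))ᵀ)) :
    ∀ t : ℕ,
      frobSq (chain (W t) 1 L - cols1 r m (U L) * chain (What t) 1 L * (cols1 r m (V 1))ᵀ)
        = (m : ℝ) * ∏ l ∈ Finset.Icc 1 L, (ρ t l)^2 := by
  classical
  -- decomposed form of each weight matrix
  have hWl : ∀ t l, 1 ≤ l → l ≤ L →
      W t l = U l * _root_.blockDiag r m (Wtil t l) (ρ t l • 1) * (V l)ᵀ := by
    intro t l h1 h2
    have hd := hdecomp t l h1 h2
    have h3 : U l * ((U l)ᵀ * W t l * V l) * (V l)ᵀ = W t l := by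
      have e1 : U l * ((U l)ᵀ * W t l * V l) * (V l)ᵀ
          = (U l * (U l)ᵀ) * (W t l * (V l * (V l)ᵀ)) := by
        simp only [Matrix.mul_assoc]
      rw [e1, (hU l h1 h2).2, (hV l h1 h2).2, Matrix.one_mul, Matrix.mul_one]
    rw [← h3, hd]
  -- block-diagonal form of chains
  have claimA : ∀ t i j, 1 ≤ i → i ≤ j → j ≤ L →
      chain (W t) i j = U j * _root_.blockDiag r m (chain (Wtil t) i j)
        ((∏ l ∈ Finset.Icc i j, ρ t l) • 1) * (V i)ᵀ := by
    intro t i j h1 hij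
    induction j, hij using Nat.le_induction with
    | base =>
      intro hiL
      rw [S12.chain_self, S12.chain_self, Finset.Icc_self, Finset.prod_singleton]
      exact hWl t i h1 hiL
    | succ j hij ih =>
      intro hjL
      have hjL' : j ≤ L := by omega
      rw [S12.chain_succ _ (by omega), ih hjL', hWl t (j+1) (by omega) hjL,
        hUV j (by omega) hjL,
        S12.sandwich _ _ _ _ _ (hU j (by omega) hjL').1, S12.bd_mul,
        ← S12.chain_succ (Wtil t) (by omega),
        Finset.prod_Icc_succ_top (by omega : i ≤ j + 1)]
      congr 2
      simp [Matrix.smul_mul, Matrix.mul_smul, smul_smul, mul_comm]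
  have claimA' : ∀ t l, 1 ≤ l → l ≤ L →
      chain (W t) (l+1) L = U L * _root_.blockDiag r m (chain (Wtil t) (l+1) L)
        ((∏ k ∈ Finset.Icc (l+1) L, ρ t k) • 1) * (U l)ᵀ := by
    intro t l h1 h2
    rcases eq_or_lt_of_le h2 with h | h
    · subst h
      rw [S12.chain_empty _ (by omega), S12.chain_empty _ (by omega),
        Finset.Icc_eq_empty (by omega), Finset.prod_empty, one_smul, S12.bd_one,
        Matrix.mul_one, (hU l h1 le_rfl).2]
    · rw [claimA t (l+1) L (by omega) (by omega) le_rfl, hUV l h1 (by omega)]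
  have claimA'' : ∀ t l, 1 ≤ l → l ≤ L →
      chain (W t) 1 (l-1) = V l * _root_.blockDiag r m (chain (Wtil t) 1 (l-1))
        ((∏ k ∈ Finset.Icc 1 (l-1), ρ t k) • 1) * (V 1)ᵀ := by
    intro t l h1 h2
    rcases eq_or_lt_of_le h1 with h | h
    · rw [← h]
      rw [S12.chain_empty _ (by omega), S12.chain_empty _ (by omega),
        Finset.Icc_eq_empty (by omega), Finset.prod_empty, one_smul, S12.bd_one,
        Matrix.mul_one, (hV 1 le_rfl hL).2]
    · have h3 : l - 1 + 1 = l := by omega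
      have h4 : U (l-1) = V l := by
        have := hUV (l-1) (by omega) (by omega)
        rw [h3] at this
        exact this.symm
      rw [claimA t 1 (l-1) le_rfl (by omega) (by omega), h4]
  -- the compressed iterates agree with the top-left blocks
  have claimB : ∀ t l, 1 ≤ l → l ≤ L → Wtil t l = What t l := by
    intro t
    induction t with
    | zero => intro l h1 h2; rw [hWtil0 l h1 h2, hWhat0 l h1 h2]
    | succ t ih =>
      intro l h1 h2
      have hCt : (chain (W t) (l+1) L)ᵀ
          = U l * _root_.blockDiag r m (chain (Wtil t) (l+1) L)ᵀ
              ((∏ k ∈ Finset.Icc (l+1) L, ρ t k) • 1) * (U L)ᵀ := by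
        rw [claimA' t l h1 h2]
        simp only [Matrix.transpose_mul, Matrix.transpose_transpose, S12.bd_transpose,
          Matrix.transpose_smul, Matrix.transpose_one, Matrix.mul_assoc]
      have hDt : (chain (W t) 1 (l-1))ᵀ
          = V 1 * _root_.blockDiag r m (chain (Wtil t) 1 (l-1))ᵀ
              ((∏ k ∈ Finset.Icc 1 (l-1), ρ t k) • 1) * (V l)ᵀ := by
        rw [claimA'' t l h1 h2]
        simp only [Matrix.transpose_mul, Matrix.transpose_transpose, S12.bd_transpose,
          Matrix.transpose_smul, Matrix.transpose_one, Matrix.mul_assoc]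
      have c1 : ∀ Z : Matrix (Fin (2*r + m)) (Fin (2*r + m)) ℝ,
          (U l)ᵀ * (U l * Z) = Z := fun Z => by
        rw [← Matrix.mul_assoc, (hU l h1 h2).1, Matrix.one_mul]
      have c2 : ∀ Z : Matrix (Fin (2*r + m)) (Fin (2*r + m)) ℝ,
          (U L)ᵀ * (U L * Z) = Z := fun Z => by
        rw [← Matrix.mul_assoc, (hU L hL le_rfl).1, Matrix.one_mul]
      have c3 : ∀ Z : Matrix (Fin (2*r + m)) (Fin (2*r + m)) ℝ,
          (V 1)ᵀ * (V 1 * Z) = Z := fun Z => by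
        rw [← Matrix.mul_assoc, (hV 1 le_rfl hL).1, Matrix.one_mul]
      have c4 : (V l)ᵀ * V l = 1 := (hV l h1 h2).1
      have key1 : (U l)ᵀ * ((chain (W t) (l+1) L)ᵀ * (chain (W t) 1 L - Φ)
            * (chain (W t) 1 (l-1))ᵀ) * V l
          = _root_.blockDiag r m (chain (Wtil t) (l+1) L)ᵀ
              ((∏ k ∈ Finset.Icc (l+1) L, ρ t k) • 1)
            * (_root_.blockDiag r m (chain (Wtil t) 1 L)
                ((∏ k ∈ Finset.Icc 1 L, ρ t k) • 1) - (U L)ᵀ * Φ * V 1)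
            * _root_.blockDiag r m (chain (Wtil t) 1 (l-1))ᵀ
              ((∏ k ∈ Finset.Icc 1 (l-1), ρ t k) • 1) := by
        rw [hCt, hDt, claimA t 1 L le_rfl hL le_rfl]
        simp only [Matrix.mul_sub, Matrix.sub_mul, Matrix.mul_assoc, c1, c2, c3, c4,
          Matrix.mul_one]
      have key : _root_.blockDiag r m (Wtil (t+1) l) (ρ (t+1) l • 1)
          = (1 - η*lam) • _root_.blockDiag r m (Wtil t l) (ρ t l • 1)
            - η • (_root_.blockDiag r m (chain (Wtil t) (l+1) L)ᵀ
              ((∏ k ∈ Finset.Icc (l+1) L, ρ t k) • 1)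
            * (_root_.blockDiag r m (chain (Wtil t) 1 L)
                ((∏ k ∈ Finset.Icc 1 L, ρ t k) • 1) - (U L)ᵀ * Φ * V 1)
            * _root_.blockDiag r m (chain (Wtil t) 1 (l-1))ᵀ
              ((∏ k ∈ Finset.Icc 1 (l-1), ρ t k) • 1)) := by
        rw [← hdecomp (t+1) l h1 h2, hWupd t l h1 h2]
        have e : (U l)ᵀ * ((1 - η*lam) • W t l
              - η • ((chain (W t) (l+1) L)ᵀ * (chain (W t) 1 L - Φ)
                * (chain (W t) 1 (l-1))ᵀ)) * V l
            = (1 - η*lam) • ((U l)ᵀ * W t l * V l)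
              - η • ((U l)ᵀ * ((chain (W t) (l+1) L)ᵀ * (chain (W t) 1 L - Φ)
                * (chain (W t) 1 (l-1))ᵀ) * V l) := by
          simp only [Matrix.mul_sub, Matrix.sub_mul, Matrix.mul_smul, Matrix.smul_mul]
        rw [e, hdecomp t l h1 h2, key1]
      have step := congrArg (S12.tl r m) key
      simp only [S12.tl_sub, S12.tl_smul, S12.tl_bd, S12.tl_bd_mul_bd, S12.tl_conj] at step
      rw [step, hWhatupd t l h1 h2, ih l h1 h2,
        S12.chain_congr (Wtil t) (What t) (fun k hk hk' => ih k (by omega) hk'),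
        S12.chain_congr (Wtil t) (What t) (fun k hk hk' => ih k hk hk'),
        S12.chain_congr (Wtil t) (What t) (fun k hk hk' => ih k hk (by omega))]
  -- final computation
  intro t
  rw [claimA t 1 L le_rfl hL le_rfl,
    S12.chain_congr (What t) (Wtil t) (fun k hk hk' => (claimB t k hk hk').symm),
    S12.cols1_conj]
  have e1 : U L * _root_.blockDiag r m (chain (Wtil t) 1 L)
        ((∏ l ∈ Finset.Icc 1 L, ρ t l) • 1) * (V 1)ᵀ
      - U L * _root_.blockDiag r m (chain (Wtil t) 1 L) 0 * (V 1)ᵀ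
      = U L * _root_.blockDiag r m 0 ((∏ l ∈ Finset.Icc 1 L, ρ t l) • 1) * (V 1)ᵀ := by
    rw [← Matrix.sub_mul, ← Matrix.mul_sub, S12.bd_sub]
    simp
  rw [e1]
  unfold frobSq
  have e2 : (U L * _root_.blockDiag r m 0 ((∏ l ∈ Finset.Icc 1 L, ρ t l) • 1) * (V 1)ᵀ)ᵀ
      = V 1 * (_root_.blockDiag r m 0 ((∏ l ∈ Finset.Icc 1 L, ρ t l) • 1))ᵀ * (U L)ᵀ := by
    simp only [Matrix.transpose_mul, Matrix.transpose_transpose, Matrix.mul_assoc]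
  rw [e2, S12.sandwich _ _ _ _ _ (hU L hL le_rfl).1, Matrix.trace_mul_cycle,
    (hV 1 le_rfl hL).1, Matrix.one_mul, S12.bd_transpose, S12.bd_mul]
  have e3 : ((0 : Matrix (Fin (2*r)) (Fin (2*r)) ℝ)ᵀ * 0) = 0 := by simp
  have e4 : (((∏ l ∈ Finset.Icc 1 L, ρ t l) • (1 : Matrix (Fin m) (Fin m) ℝ))ᵀ
      * ((∏ l ∈ Finset.Icc 1 L, ρ t l) • 1))
      = ((∏ l ∈ Finset.Icc 1 L, ρ t l)^2) • (1 : Matrix (Fin m) (Fin m) ℝ) := by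
    simp [Matrix.transpose_smul, Matrix.smul_mul, Matrix.mul_smul, smul_smul, sq]
  rw [e3, e4, S12.trace_bd]
  simp [Finset.prod_pow]
  ring
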